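/- Let K be an algebraically closed field of characteristic p > 2 and let M ≥ m ≥ 1, N ≥ n ≥ 1. For every t ≥ 0, the evaluation homomorphism p_e maps the homogeneous component A_ns(M|N,t) of degree t of A_ns(M|N) onto the homogeneous component A_ns(m|n,t) of degree t of A_ns(m|n). -/

import Mathlib

open MvPolynomial

noncomputable section

/-- The substitution `x_m = y_n = T`, landing in polynomials in `T` over the original ring
(the image only involves the remaining variables). -/
def psiSub (K : Type*) [CommSemiring K] (m n : ℕ) :
    MvPolynomial (Fin m ⊕ Fin n) K →ₐ[K] Polynomial (MvPolynomial (Fin m ⊕ Fin n) K) :=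
  MvPolynomial.aeval (Sum.elim
    (fun i : Fin m => if (i : ℕ) = m - 1 then Polynomial.X
      else Polynomial.C (MvPolynomial.X (Sum.inl i)))
    (fun j : Fin n => if (j : ℕ) = n - 1 then Polynomial.X
      else Polynomial.C (MvPolynomial.X (Sum.inr j))))

/-- `f` is supersymmetric: symmetric in the `x` and `y` variables separately, and
`(d/dT) f|_{x_m = y_n = T} = 0`. -/
def IsSupersymmetric (K : Type*) [CommSemiring K] (m n : ℕ)
    (f : MvPolynomial (Fin m ⊕ Fin n) K) : Prop :=
  (∀ σ : Equiv.Perm (Fin m), MvPolynomial.rename (Sum.map σ id) f = f) ∧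
  (∀ τ : Equiv.Perm (Fin n), MvPolynomial.rename (Sum.map id τ) f = f) ∧
  Polynomial.derivative (psiSub K m n f) = 0

/-- `c_r(x|y) = Σ_{i=0}^{min(r,m)} (−1)^{r−i} σ_i(x) h_{r−i}(y)`. -/
def cpoly (K : Type*) [CommRing K] (m n r : ℕ) : MvPolynomial (Fin m ⊕ Fin n) K :=
  ∑ i ∈ Finset.range (min r m + 1),
    (-1 : MvPolynomial (Fin m ⊕ Fin n) K) ^ (r - i) *
      (MvPolynomial.rename Sum.inl (MvPolynomial.esymm (Fin m) K i)) *
      (MvPolynomial.rename Sum.inr (MvPolynomial.hsymm (Fin n) K (r - i)))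

/-- σ_i(x_1,…,x_m), viewed in K[x_1,…,x_m,y_1,…,y_n]. -/
def sigmaX (K : Type*) [CommSemiring K] (m n i : ℕ) : MvPolynomial (Fin m ⊕ Fin n) K :=
  MvPolynomial.rename Sum.inl (MvPolynomial.esymm (Fin m) K i)

/-- σ_j(y_1,…,y_n), viewed in K[x_1,…,x_m,y_1,…,y_n]. -/
def sigmaY (K : Type*) [CommSemiring K] (m n j : ℕ) : MvPolynomial (Fin m ⊕ Fin n) K :=
  MvPolynomial.rename Sum.inr (MvPolynomial.esymm (Fin n) K j)

/-- The generators of the algebra `A_ns(m|n)` of nice supersymmetric polynomials: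
`c_r` (r ≥ 0), `σ_i(x)^p` (1 ≤ i ≤ m), `σ_j(y)^p` (1 ≤ j ≤ n) and
`u_k = σ_m(x)^k σ_n(y)^{p-k}` (0 < k < p). -/
def nsGens (K : Type*) [CommRing K] (p m n : ℕ) : Set (MvPolynomial (Fin m ⊕ Fin n) K) :=
  {f | ∃ r : ℕ, f = cpoly K m n r} ∪
  {f | ∃ i : ℕ, 1 ≤ i ∧ i ≤ m ∧ f = (sigmaX K m n i) ^ p} ∪
  {f | ∃ j : ℕ, 1 ≤ j ∧ j ≤ n ∧ f = (sigmaY K m n j) ^ p} ∪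
  {f | ∃ k : ℕ, 0 < k ∧ k < p ∧ f = (sigmaX K m n m) ^ k * (sigmaY K m n n) ^ (p - k)}

/-- The evaluation morphism `p_e` sending `x_i ↦ x_i` (i ≤ m), `y_j ↦ y_j` (j ≤ n) and the
remaining variables to `0`. -/
def pe (K : Type*) [CommSemiring K] (M N m n : ℕ) :
    MvPolynomial (Fin M ⊕ Fin N) K →ₐ[K] MvPolynomial (Fin m ⊕ Fin n) K :=
  MvPolynomial.aeval (Sum.elim
    (fun i : Fin M => if h : (i : ℕ) < m then MvPolynomial.X (Sum.inl ⟨(i : ℕ), h⟩) else 0)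
    (fun j : Fin N => if h : (j : ℕ) < n then MvPolynomial.X (Sum.inr ⟨(j : ℕ), h⟩) else 0))

end

open MvPolynomial PowerSeries Finset

noncomputable section AuxPS

variable {R : Type*} [CommRing R]

/-- geometric series `Σ r^k T^k`. -/
def geoPS (r : R) : PowerSeries R := PowerSeries.mk fun k => r ^ k

@[simp] lemma coeff_geoPS (r : R) (k : ℕ) : PowerSeries.coeff k (geoPS r) = r ^ k :=
  PowerSeries.coeff_mk _ _

lemma coeffPS_X_mul (g : PowerSeries R) (j : ℕ) :
    PowerSeries.coeff j (PowerSeries.X * g) = if j = 0 then 0 else PowerSeries.coeff (j-1) g := by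
  rcases j with _ | j
  · simp [PowerSeries.coeff_zero_eq_constantCoeff]
  · simpa using PowerSeries.coeff_X_pow_mul g 1 j

lemma lin_mul_geoPS_neg (r : R) :
    (1 + PowerSeries.C r * PowerSeries.X) * geoPS (-r) = 1 := by
  ext j
  rw [add_mul, one_mul, mul_assoc, map_add, PowerSeries.coeff_C_mul, coeffPS_X_mul]
  rcases j with _ | j
  · simp [geoPS]
  · simp only [Nat.succ_ne_zero, if_false, Nat.add_sub_cancel, coeff_geoPS,
      PowerSeries.coeff_one]
    rw [pow_succ]
    ring

lemma mesymm_zero (t : Multiset R) : t.esymm 0 = 1 := by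
  simp [Multiset.esymm, Multiset.powersetCard_zero_left]

lemma mesymm_cons (r : R) (t : Multiset R) (j : ℕ) :
    (r ::ₘ t).esymm (j+1) = t.esymm (j+1) + r * t.esymm j := by
  rw [Multiset.esymm, Multiset.powersetCard_cons, Multiset.map_add, Multiset.sum_add,
    Multiset.map_map]
  congr 1
  rw [Multiset.esymm, ← Multiset.sum_map_mul_left]
  congr 1
  exact Multiset.map_congr rfl fun s _ => by simp [Multiset.prod_cons]

lemma mesymm_of_lt {t : Multiset R} {j : ℕ} (h : Multiset.card t < j) : t.esymm j = 0 := by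
  rw [Multiset.esymm, Multiset.powersetCard_eq_empty _ h]
  simp

lemma mesymm_self (t : Multiset R) : t.esymm (Multiset.card t) = t.prod := by
  induction t using Multiset.induction with
  | empty => simp [mesymm_zero]
  | cons r t ih =>
      rw [Multiset.card_cons, mesymm_cons, mesymm_of_lt (by simp), ih, zero_add,
        Multiset.prod_cons]

/-- Coefficients of `∏ (1 + r T^q)` over a multiset. -/
lemma coeff_prod_linpow (q : ℕ) (hq : 0 < q) (t : Multiset R) (j : ℕ) :
    PowerSeries.coeff j ((t.map fun r => 1 + PowerSeries.C r * PowerSeries.X ^ q)).prod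
      = if q ∣ j then t.esymm (j / q) else 0 := by
  induction t using Multiset.induction generalizing j with
  | empty =>
      simp only [Multiset.map_zero, Multiset.prod_zero, PowerSeries.coeff_one]
      by_cases h : j = 0
      · subst h; simp [mesymm_zero, Nat.zero_div]
      · rw [if_neg h]
        by_cases hd : q ∣ j
        · rw [if_pos hd, mesymm_of_lt]
          simpa using Nat.div_pos (Nat.le_of_dvd (Nat.pos_of_ne_zero h) hd) hq
        · rw [if_neg hd]
  | cons r t ih =>
      rw [Multiset.map_cons, Multiset.prod_cons, add_mul, one_mul, mul_assoc, map_add,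
        PowerSeries.coeff_C_mul, mul_comm (PowerSeries.X ^ q), PowerSeries.coeff_mul_X_pow',
        ih]
      by_cases hle : q ≤ j
      · rw [if_pos hle, ih]
        by_cases hd : q ∣ j
        · have hd' : q ∣ j - q := (Nat.dvd_sub hd dvd_rfl)
          rw [if_pos hd, if_pos hd']
          obtain ⟨c, rfl⟩ := hd
          have hc : 1 ≤ c := by
            rcases Nat.eq_zero_or_pos c with h | h
            · subst h; simp at hle; omega
            · exact h
          have h1 : q * c / q = c := Nat.mul_div_cancel_left c hq
          have h3 : q * c - q = q * (c - 1) := by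
            rcases c with _ | c
            · omega
            · rw [Nat.mul_succ]; simp
          have h2 : (q * c - q) / q = c - 1 := by
            rw [h3, Nat.mul_div_cancel_left _ hq]
          rw [h1, h2]
          have hc' : c - 1 + 1 = c := Nat.sub_add_cancel hc
          conv_rhs => rw [← hc']
          rw [mesymm_cons, hc', if_pos ⟨c, rfl⟩]
        · have hd' : ¬ q ∣ j - q := fun h => hd (by
            have := Nat.dvd_add h (dvd_refl q)
            rwa [Nat.sub_add_cancel hle] at this)
          rw [if_neg hd, if_neg hd', mul_zero, add_zero, if_neg hd]
      · rw [if_neg hle, mul_zero, add_zero]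
        by_cases hd : q ∣ j
        · have : j = 0 := by
            rcases hd with ⟨c, rfl⟩
            rcases Nat.eq_zero_or_pos c with h | h
            · simp [h]
            · exfalso; exact hle (Nat.le_mul_of_pos_right q h)
          subst this
          simp [mesymm_zero, Nat.zero_div]
        · rw [if_neg hd, if_neg hd]

lemma coeff_prod_lin (t : Multiset R) (j : ℕ) :
    PowerSeries.coeff j ((t.map fun r => 1 + PowerSeries.C r * PowerSeries.X)).prod
      = t.esymm j := by
  have h := coeff_prod_linpow 1 one_pos t j
  simpa [pow_one, Nat.div_one] using h

lemma prod_pow_count {σ : Type*} [Fintype σ] [DecidableEq σ] (a : σ → R) (t : Multiset σ) :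
    (∏ i, a i ^ t.count i) = (t.map a).prod := by
  induction t using Multiset.induction with
  | empty => simp
  | cons x t ih =>
      simp only [Multiset.count_cons, pow_add, Finset.prod_mul_distrib, ih,
        Multiset.map_cons, Multiset.prod_cons]
      rw [mul_comm]
      congr 1
      rw [show (∏ i, a i ^ if i = x then 1 else 0) = ∏ i, (if i = x then a i else 1) from
        Finset.prod_congr rfl fun i _ => by split <;> simp]
      rw [Finset.prod_ite_eq' Finset.univ x a, if_pos (Finset.mem_univ x)]

lemma coeff_prod_geoPS {σ : Type*} [Fintype σ] [DecidableEq σ] (a : σ → R) (b : ℕ) :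
    PowerSeries.coeff b (∏ i, geoPS (a i)) = ∑ s : Sym σ b, (s.1.map a).prod := by
  rw [PowerSeries.coeff_prod]
  refine Finset.sum_bij'
    (fun l hl => (⟨Finsupp.toMultiset l, by
      rcases Finset.mem_finsuppAntidiag.mp hl with ⟨h1, h2⟩
      rw [Finsupp.card_toMultiset]
      rw [show (l.sum fun _ => id) = (l.sum fun _ x => x) from rfl,
        Finsupp.sum_fintype _ _ (fun i => rfl)]
      exact h1⟩ : Sym σ b))
    (fun s _ => Multiset.toFinsupp s.1)
    (fun l hl => Finset.mem_univ _) ?_ (fun l hl => Finsupp.toMultiset_toFinsupp l)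
    (fun s hs => Sym.ext (by simp [Multiset.toFinsupp_toMultiset])) ?_
  · intro s hs
    rw [Finset.mem_finsuppAntidiag]
    refine ⟨?_, Finset.subset_univ _⟩
    have h := Finsupp.sum_fintype (Multiset.toFinsupp s.1) (fun _ x => x) (fun i => rfl)
    rw [show (univ.sum ⇑(Multiset.toFinsupp s.1)) = ∑ i, (Multiset.toFinsupp s.1) i from rfl,
      ← h]
    rw [show ((Multiset.toFinsupp s.1).sum fun _ x => x)
        = ((Multiset.toFinsupp s.1).sum fun _ => id) from rfl, ← Finsupp.card_toMultiset,
      Multiset.toFinsupp_toMultiset]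
    exact s.2
  · intro l hl
    simp only [coeff_geoPS]
    rw [show (∏ i, a i ^ l i) = ∏ i, a i ^ (Finsupp.toMultiset l).count i from
      Finset.prod_congr rfl fun i _ => by rw [Finsupp.count_toMultiset]]
    exact prod_pow_count a _

end AuxPS

noncomputable section AuxMv

variable (K : Type*) [CommRing K] (m n : ℕ)

/-- `∏ (1 + x_i T)` -/
def fGen : PowerSeries (MvPolynomial (Fin m ⊕ Fin n) K) :=
  ∏ i : Fin m, (1 + PowerSeries.C (MvPolynomial.X (Sum.inl i)) * PowerSeries.X)

/-- `∏ (1 + y_j T)` -/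
def gGen : PowerSeries (MvPolynomial (Fin m ⊕ Fin n) K) :=
  ∏ j : Fin n, (1 + PowerSeries.C (MvPolynomial.X (Sum.inr j)) * PowerSeries.X)

/-- `∏ (1 - y_j T)⁻¹` -/
def hGen : PowerSeries (MvPolynomial (Fin m ⊕ Fin n) K) :=
  ∏ j : Fin n, geoPS (- MvPolynomial.X (Sum.inr j))

/-- generating series of the `c_r` -/
def cGen : PowerSeries (MvPolynomial (Fin m ⊕ Fin n) K) := PowerSeries.mk (cpoly K m n)

lemma fGen_eq : fGen K m n =
    (((Finset.univ.val.map fun i : Fin m => (MvPolynomial.X (Sum.inl i) :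
        MvPolynomial (Fin m ⊕ Fin n) K))).map
      fun r => 1 + PowerSeries.C r * PowerSeries.X).prod := by
  rw [fGen, Finset.prod_eq_multiset_prod, Multiset.map_map]
  rfl

lemma gGen_eq : gGen K m n =
    (((Finset.univ.val.map fun j : Fin n => (MvPolynomial.X (Sum.inr j) :
        MvPolynomial (Fin m ⊕ Fin n) K))).map
      fun r => 1 + PowerSeries.C r * PowerSeries.X).prod := by
  rw [gGen, Finset.prod_eq_multiset_prod, Multiset.map_map]
  rfl

lemma sigmaX_eq_sum (i : ℕ) : sigmaX K m n i =
    ∑ A ∈ Finset.powersetCard i Finset.univ, ∏ a ∈ A, MvPolynomial.X (Sum.inl a) := by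
  rw [sigmaX, MvPolynomial.esymm, map_sum]
  exact Finset.sum_congr rfl fun A _ => by rw [map_prod]; simp

lemma sigmaY_eq_sum (j : ℕ) : sigmaY K m n j =
    ∑ A ∈ Finset.powersetCard j Finset.univ, ∏ a ∈ A, MvPolynomial.X (Sum.inr a) := by
  rw [sigmaY, MvPolynomial.esymm, map_sum]
  exact Finset.sum_congr rfl fun A _ => by rw [map_prod]; simp

lemma coeff_fGen (i : ℕ) :
    PowerSeries.coeff i (fGen K m n) = sigmaX K m n i := by
  rw [fGen_eq, coeff_prod_lin, Finset.esymm_map_val, sigmaX_eq_sum]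

lemma coeff_gGen (j : ℕ) :
    PowerSeries.coeff j (gGen K m n) = sigmaY K m n j := by
  rw [gGen_eq, coeff_prod_lin, Finset.esymm_map_val, sigmaY_eq_sum]

lemma sigmaX_eq_zero {i : ℕ} (h : m < i) : sigmaX K m n i = 0 := by
  rw [sigmaX_eq_sum, Finset.powersetCard_eq_empty.mpr (by simpa using h), Finset.sum_empty]

lemma sigmaY_eq_zero {j : ℕ} (h : n < j) : sigmaY K m n j = 0 := by
  rw [sigmaY_eq_sum, Finset.powersetCard_eq_empty.mpr (by simpa using h), Finset.sum_empty]

lemma sigmaX_top : sigmaX K m n m = ∏ i : Fin m, MvPolynomial.X (Sum.inl i) := by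
  rw [sigmaX_eq_sum]
  rw [show (Finset.powersetCard m (Finset.univ : Finset (Fin m)))
      = Finset.powersetCard (Finset.univ : Finset (Fin m)).card Finset.univ by
    rw [Finset.card_univ, Fintype.card_fin]]
  rw [Finset.powersetCard_self, Finset.sum_singleton]

lemma sigmaY_top : sigmaY K m n n = ∏ j : Fin n, MvPolynomial.X (Sum.inr j) := by
  rw [sigmaY_eq_sum]
  rw [show (Finset.powersetCard n (Finset.univ : Finset (Fin n)))
      = Finset.powersetCard (Finset.univ : Finset (Fin n)).card Finset.univ by
    rw [Finset.card_univ, Fintype.card_fin]]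
  rw [Finset.powersetCard_self, Finset.sum_singleton]

lemma rename_hsymm_eq (b : ℕ) :
    (MvPolynomial.rename Sum.inr (MvPolynomial.hsymm (Fin n) K b) :
        MvPolynomial (Fin m ⊕ Fin n) K)
      = ∑ s : Sym (Fin n) b, (s.1.map fun j => (MvPolynomial.X (Sum.inr j) :
          MvPolynomial (Fin m ⊕ Fin n) K)).prod := by
  rw [MvPolynomial.hsymm, map_sum]
  refine Finset.sum_congr rfl fun s _ => ?_
  rw [← Multiset.prod_hom' s.1 (MvPolynomial.rename (R := K) (Sum.inr : Fin n → Fin m ⊕ Fin n))]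
  simp

lemma coeff_hGen (b : ℕ) :
    PowerSeries.coeff b (hGen K m n)
      = (-1 : MvPolynomial (Fin m ⊕ Fin n) K) ^ b *
          MvPolynomial.rename Sum.inr (MvPolynomial.hsymm (Fin n) K b) := by
  rw [hGen, coeff_prod_geoPS, rename_hsymm_eq, Finset.mul_sum]
  refine Finset.sum_congr rfl fun s _ => ?_
  rw [show (s.1.map fun j => (- MvPolynomial.X (Sum.inr j) :
        MvPolynomial (Fin m ⊕ Fin n) K))
      = (s.1.map fun j => (MvPolynomial.X (Sum.inr j) :
          MvPolynomial (Fin m ⊕ Fin n) K)).map Neg.neg by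
    rw [Multiset.map_map]; rfl]
  rw [Multiset.prod_map_neg]
  simp [s.2]

lemma coeff_cGen (r : ℕ) : PowerSeries.coeff r (cGen K m n) = cpoly K m n r :=
  PowerSeries.coeff_mk _ _

lemma gGen_mul_hGen : gGen K m n * hGen K m n = 1 := by
  rw [gGen, hGen, ← Finset.prod_mul_distrib]
  exact Finset.prod_eq_one fun j _ => lin_mul_geoPS_neg _

lemma cGen_eq : cGen K m n = fGen K m n * hGen K m n := by
  refine PowerSeries.ext fun r => ?_
  rw [cGen, PowerSeries.coeff_mk, PowerSeries.coeff_mul,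
    Finset.Nat.sum_antidiagonal_eq_sum_range_succ_mk]
  simp only [coeff_fGen, coeff_hGen]
  rw [cpoly, ← Finset.sum_subset (Finset.range_subset_range.mpr (by omega : min r m + 1 ≤ r + 1))]
  · exact Finset.sum_congr rfl fun i _ => by rw [sigmaX]; ring
  · intro i hi hni
    simp only [Finset.mem_range] at hi hni
    rw [sigmaX_eq_zero K m n (by omega), zero_mul]

lemma isHomog_sigmaX (i : ℕ) : (sigmaX K m n i).IsHomogeneous i := by
  rw [sigmaX_eq_sum]
  apply MvPolynomial.IsHomogeneous.sum
  intro A hA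
  have h := MvPolynomial.IsHomogeneous.prod A (fun a => (MvPolynomial.X (Sum.inl a) : MvPolynomial (Fin m ⊕ Fin n) K))
    (fun _ => 1) (fun a _ => MvPolynomial.isHomogeneous_X _ _)
  have hc : ∑ _a ∈ A, 1 = i := by
    rw [Finset.sum_const, smul_eq_mul, mul_one]
    exact (Finset.mem_powersetCard.mp hA).2
  rwa [hc] at h

lemma isHomog_sigmaY (j : ℕ) : (sigmaY K m n j).IsHomogeneous j := by
  rw [sigmaY_eq_sum]
  apply MvPolynomial.IsHomogeneous.sum
  intro A hA
  have h := MvPolynomial.IsHomogeneous.prod A (fun a => (MvPolynomial.X (Sum.inr a) : MvPolynomial (Fin m ⊕ Fin n) K))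
    (fun _ => 1) (fun a _ => MvPolynomial.isHomogeneous_X _ _)
  have hc : ∑ _a ∈ A, 1 = j := by
    rw [Finset.sum_const, smul_eq_mul, mul_one]
    exact (Finset.mem_powersetCard.mp hA).2
  rwa [hc] at h

lemma isHomog_multiset_prod (t : Multiset (Fin n)) :
    ((t.map fun j => (MvPolynomial.X (Sum.inr j) :
      MvPolynomial (Fin m ⊕ Fin n) K)).prod).IsHomogeneous (Multiset.card t) := by
  induction t using Multiset.induction with
  | empty => simpa using MvPolynomial.isHomogeneous_one _ _
  | cons x t ih =>
      rw [Multiset.map_cons, Multiset.prod_cons, Multiset.card_cons, add_comm]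
      exact (MvPolynomial.isHomogeneous_X _ _).mul ih

lemma isHomog_hY (b : ℕ) :
    ((MvPolynomial.rename Sum.inr (MvPolynomial.hsymm (Fin n) K b) :
      MvPolynomial (Fin m ⊕ Fin n) K)).IsHomogeneous b := by
  rw [rename_hsymm_eq]
  apply MvPolynomial.IsHomogeneous.sum
  intro s _
  have h := isHomog_multiset_prod K m n s.1
  rwa [s.2] at h

lemma isHomog_cpoly (r : ℕ) : (cpoly K m n r).IsHomogeneous r := by
  rw [cpoly]
  apply MvPolynomial.IsHomogeneous.sum
  intro i hi
  simp only [Finset.mem_range] at hi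
  have h1 : ((-1 : MvPolynomial (Fin m ⊕ Fin n) K) ^ (r - i)).IsHomogeneous 0 := by
    have := (MvPolynomial.isHomogeneous_C (Fin m ⊕ Fin n) (-1 : K)).pow (r - i)
    rwa [zero_mul, map_neg, map_one] at this
  have h := (h1.mul (isHomog_sigmaX K m n i)).mul (isHomog_hY K m n (r - i))
  rwa [zero_add, show i + (r - i) = r by omega] at h

end AuxMv

noncomputable section AuxPe

lemma prod_castLE {β : Type*} [CommMonoid β] {m M : ℕ} (hM : m ≤ M) (F : Fin M → β)
    (h1 : ∀ i : Fin M, m ≤ (i : ℕ) → F i = 1) :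
    ∏ i, F i = ∏ i : Fin m, F (Fin.castLE hM i) := by
  have h2 : ∏ i ∈ (Finset.univ : Finset (Fin m)).map (Fin.castLEEmb hM), F i
      = ∏ i : Fin m, F (Fin.castLE hM i) := by
    rw [Finset.prod_map]; rfl
  rw [← h2]
  refine (Finset.prod_subset (Finset.subset_univ _) fun i _ hi => ?_).symm
  refine h1 i ?_
  by_contra hlt
  push_neg at hlt
  exact hi (Finset.mem_map.mpr ⟨⟨(i : ℕ), hlt⟩, Finset.mem_univ _, Fin.ext rfl⟩)

variable (K : Type*) [CommRing K] (M N m n : ℕ) (hM : m ≤ M) (hN : n ≤ N)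

lemma pe_X_inl (i : Fin M) : pe K M N m n (MvPolynomial.X (Sum.inl i))
    = if h : (i : ℕ) < m then MvPolynomial.X (Sum.inl ⟨(i : ℕ), h⟩) else 0 := by
  simp [pe]

lemma pe_X_inr (j : Fin N) : pe K M N m n (MvPolynomial.X (Sum.inr j))
    = if h : (j : ℕ) < n then MvPolynomial.X (Sum.inr ⟨(j : ℕ), h⟩) else 0 := by
  simp [pe]

lemma map_geoPS {R S : Type*} [CommRing R] [CommRing S] (f : R →+* S) (r : R) :
    PowerSeries.map f (geoPS r) = geoPS (f r) := by
  refine PowerSeries.ext fun k => ?_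
  rw [PowerSeries.coeff_map, coeff_geoPS, coeff_geoPS, map_pow]

lemma geoPS_zero {R : Type*} [CommRing R] : geoPS (0 : R) = 1 := by
  refine PowerSeries.ext fun k => ?_
  rw [coeff_geoPS, PowerSeries.coeff_one]
  rcases k with _ | k <;> simp

include hM in
lemma map_pe_fGen : PowerSeries.map (pe K M N m n).toRingHom (fGen K M N) = fGen K m n := by
  rw [fGen, map_prod]
  have hfac : ∀ i : Fin M, PowerSeries.map (pe K M N m n).toRingHom
      (1 + PowerSeries.C (MvPolynomial.X (Sum.inl i)) * PowerSeries.X)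
      = 1 + PowerSeries.C (pe K M N m n (MvPolynomial.X (Sum.inl i))) * PowerSeries.X := by
    intro i
    rw [map_add, map_one, map_mul, PowerSeries.map_C, PowerSeries.map_X]
    rfl
  rw [Finset.prod_congr rfl fun i _ => hfac i]
  rw [prod_castLE hM _ (fun i hi => by
    rw [pe_X_inl, dif_neg (by omega), map_zero, zero_mul, add_zero])]
  rw [fGen]
  refine Finset.prod_congr rfl fun i _ => ?_
  rw [pe_X_inl, dif_pos (by simpa using i.2)]
  rfl

include hN in
lemma map_pe_gGen : PowerSeries.map (pe K M N m n).toRingHom (gGen K M N) = gGen K m n := by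
  rw [gGen, map_prod]
  have hfac : ∀ j : Fin N, PowerSeries.map (pe K M N m n).toRingHom
      (1 + PowerSeries.C (MvPolynomial.X (Sum.inr j)) * PowerSeries.X)
      = 1 + PowerSeries.C (pe K M N m n (MvPolynomial.X (Sum.inr j))) * PowerSeries.X := by
    intro j
    rw [map_add, map_one, map_mul, PowerSeries.map_C, PowerSeries.map_X]
    rfl
  rw [Finset.prod_congr rfl fun j _ => hfac j]
  rw [prod_castLE hN _ (fun j hj => by
    rw [pe_X_inr, dif_neg (by omega), map_zero, zero_mul, add_zero])]
  rw [gGen]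
  refine Finset.prod_congr rfl fun j _ => ?_
  rw [pe_X_inr, dif_pos (by simpa using j.2)]
  rfl

include hN in
lemma map_pe_hGen : PowerSeries.map (pe K M N m n).toRingHom (hGen K M N) = hGen K m n := by
  rw [hGen, map_prod]
  rw [Finset.prod_congr rfl fun (j : Fin N) _ => map_geoPS (pe K M N m n).toRingHom
    (- MvPolynomial.X (Sum.inr j))]
  rw [prod_castLE hN _ (fun j hj => by
    rw [show (pe K M N m n).toRingHom (-MvPolynomial.X (Sum.inr j))
        = pe K M N m n (-MvPolynomial.X (Sum.inr j)) from rfl]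
    rw [show (pe K M N m n) (-MvPolynomial.X (Sum.inr j)) = 0 by
      rw [map_neg, pe_X_inr, dif_neg (by omega), neg_zero]]
    exact geoPS_zero)]
  rw [hGen]
  refine Finset.prod_congr rfl fun j _ => ?_
  rw [show (pe K M N m n).toRingHom (-MvPolynomial.X (Sum.inr (Fin.castLE hN j)))
      = pe K M N m n (-MvPolynomial.X (Sum.inr (Fin.castLE hN j))) from rfl]
  rw [map_neg, pe_X_inr, dif_pos (by simpa using j.2)]
  rfl

include hM hN in
lemma map_pe_cGen : PowerSeries.map (pe K M N m n).toRingHom (cGen K M N) = cGen K m n := by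
  rw [cGen_eq, cGen_eq, map_mul, map_pe_fGen K M N m n hM, map_pe_hGen K M N m n hN]

include hM hN in
lemma pe_cpoly (r : ℕ) : pe K M N m n (cpoly K M N r) = cpoly K m n r := by
  have h := congrArg (PowerSeries.coeff r) (map_pe_cGen K M N m n hM hN)
  rwa [PowerSeries.coeff_map, cGen, cGen, PowerSeries.coeff_mk, PowerSeries.coeff_mk] at h

include hM hN in
lemma pe_sigmaX (i : ℕ) : pe K M N m n (sigmaX K M N i) = sigmaX K m n i := by
  have h := congrArg (PowerSeries.coeff i) (map_pe_fGen K M N m n hM)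
  rwa [PowerSeries.coeff_map, coeff_fGen, coeff_fGen] at h

include hM hN in
lemma pe_sigmaY (j : ℕ) : pe K M N m n (sigmaY K M N j) = sigmaY K m n j := by
  have h := congrArg (PowerSeries.coeff j) (map_pe_gGen K M N m n hN)
  rwa [PowerSeries.coeff_map, coeff_gGen, coeff_gGen] at h

end AuxPe

noncomputable section AuxCharP

variable (K : Type*) [Field K] (p : ℕ) [CharP K p] [Fact p.Prime] (m n : ℕ)

lemma charP_PS : CharP (PowerSeries (MvPolynomial (Fin m ⊕ Fin n) K)) p := by
  refine charP_of_injective_ringHom (f := (PowerSeries.C : MvPolynomial (Fin m ⊕ Fin n) K →+* _))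
    (fun a b h => ?_) p
  simpa using congrArg (PowerSeries.constantCoeff) h

lemma lin_pow_char (r : MvPolynomial (Fin m ⊕ Fin n) K) :
    (1 + PowerSeries.C r * PowerSeries.X) ^ p
      = 1 + PowerSeries.C (r ^ p) * PowerSeries.X ^ p := by
  haveI := charP_PS K p m n
  rw [add_pow_char, one_pow, mul_pow, map_pow]

lemma gGen_pow_char : (gGen K m n) ^ p =
    (((Finset.univ.val.map fun j : Fin n => (MvPolynomial.X (Sum.inr j) :
        MvPolynomial (Fin m ⊕ Fin n) K) ^ p)).map
      fun r => 1 + PowerSeries.C r * PowerSeries.X ^ p).prod := by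
  rw [gGen_eq, ← Multiset.prod_map_pow, Multiset.map_map, Multiset.map_map]
  exact congrArg _ (Multiset.map_congr rfl fun j _ => lin_pow_char K p m n _)

lemma sigmaY_pow_char (j : ℕ) : (sigmaY K m n j) ^ p
    = ∑ A ∈ Finset.powersetCard j Finset.univ,
        ∏ a ∈ A, (MvPolynomial.X (Sum.inr a) : MvPolynomial (Fin m ⊕ Fin n) K) ^ p := by
  rw [sigmaY_eq_sum, show ∀ z : MvPolynomial (Fin m ⊕ Fin n) K, z ^ p
    = frobenius (MvPolynomial (Fin m ⊕ Fin n) K) p z from fun z => rfl, map_sum]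
  refine Finset.sum_congr rfl fun A _ => ?_
  rw [map_prod]
  exact Finset.prod_congr rfl fun a _ => by rw [frobenius_def]

lemma coeff_gGen_pow (a : ℕ) :
    PowerSeries.coeff a ((gGen K m n) ^ p)
      = if p ∣ a then (sigmaY K m n (a / p)) ^ p else 0 := by
  rw [gGen_pow_char, coeff_prod_linpow p (Fact.out : p.Prime).pos]
  by_cases hd : p ∣ a
  · rw [if_pos hd, if_pos hd, Finset.esymm_map_val, sigmaY_pow_char]
  · rw [if_neg hd, if_neg hd]

lemma key_identity (k : ℕ) (hk : k ≤ p) :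
    (sigmaX K m n m) ^ k * (sigmaY K m n n) ^ (p - k)
      = ∑ ab ∈ Finset.HasAntidiagonal.antidiagonal (k * m + (p - k) * n),
          (if p ∣ ab.1 then (sigmaY K m n (ab.1 / p)) ^ p else 0) *
            PowerSeries.coeff ab.2 ((cGen K m n) ^ k) := by
  have hser : (fGen K m n) ^ k * (gGen K m n) ^ (p - k)
      = (gGen K m n) ^ p * (cGen K m n) ^ k := by
    rw [cGen_eq, mul_pow]
    rw [show (gGen K m n) ^ p = (gGen K m n) ^ (p - k) * (gGen K m n) ^ k by
      rw [← pow_add, Nat.sub_add_cancel hk]]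
    rw [show (gGen K m n) ^ (p - k) * (gGen K m n) ^ k *
        ((fGen K m n) ^ k * (hGen K m n) ^ k)
        = (fGen K m n) ^ k * (gGen K m n) ^ (p - k) *
          ((gGen K m n) * (hGen K m n)) ^ k by ring]
    rw [gGen_mul_hGen, one_pow, mul_one]
  have hmul : (fGen K m n) ^ k * (gGen K m n) ^ (p - k)
      = (((k • (Finset.univ.val.map fun i : Fin m => (MvPolynomial.X (Sum.inl i) :
            MvPolynomial (Fin m ⊕ Fin n) K)))
          + ((p - k) • (Finset.univ.val.map fun j : Fin n => (MvPolynomial.X (Sum.inr j) :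
            MvPolynomial (Fin m ⊕ Fin n) K)))).map
          fun r => 1 + PowerSeries.C r * PowerSeries.X).prod := by
    rw [Multiset.map_add, Multiset.prod_add, Multiset.map_nsmul, Multiset.map_nsmul,
      Multiset.prod_nsmul, Multiset.prod_nsmul, fGen_eq, gGen_eq]
  have hcard : Multiset.card ((k • (Finset.univ.val.map fun i : Fin m => (MvPolynomial.X (Sum.inl i) :
            MvPolynomial (Fin m ⊕ Fin n) K)))
          + ((p - k) • (Finset.univ.val.map fun j : Fin n => (MvPolynomial.X (Sum.inr j) :
            MvPolynomial (Fin m ⊕ Fin n) K)))) = k * m + (p - k) * n := by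
    rw [Multiset.card_add, Multiset.card_nsmul, Multiset.card_nsmul, Multiset.card_map,
      Multiset.card_map]
    simp
  have he : ((k • (Finset.univ.val.map fun i : Fin m => (MvPolynomial.X (Sum.inl i) :
            MvPolynomial (Fin m ⊕ Fin n) K)))
          + ((p - k) • (Finset.univ.val.map fun j : Fin n => (MvPolynomial.X (Sum.inr j) :
            MvPolynomial (Fin m ⊕ Fin n) K)))).esymm (k * m + (p - k) * n)
      = (sigmaX K m n m) ^ k * (sigmaY K m n n) ^ (p - k) := by
    rw [← hcard, mesymm_self, Multiset.prod_add, Multiset.prod_nsmul,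
      Multiset.prod_nsmul, ← Finset.prod_eq_multiset_prod, ← Finset.prod_eq_multiset_prod,
      ← sigmaX_top, ← sigmaY_top]
  have hLHS := congrArg (PowerSeries.coeff (k * m + (p - k) * n)) hmul
  rw [coeff_prod_lin, he] at hLHS
  rw [← hLHS, hser, PowerSeries.coeff_mul]
  exact Finset.sum_congr rfl fun ab _ => by rw [coeff_gGen_pow]

end AuxCharP

noncomputable section Assemble

variable (K : Type*) [Field K] (p : ℕ) [CharP K p] [Fact p.Prime] (m n : ℕ)

lemma sigmaY_zero : sigmaY K m n 0 = 1 := by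
  rw [sigmaY, MvPolynomial.esymm_zero, map_one]

lemma sigmaX_zero : sigmaX K m n 0 = 1 := by
  rw [sigmaX, MvPolynomial.esymm_zero, map_one]

lemma cpoly_mem (r : ℕ) : cpoly K m n r ∈ Algebra.adjoin K (nsGens K p m n) :=
  Algebra.subset_adjoin (Or.inl (Or.inl (Or.inl ⟨r, rfl⟩)))

lemma sigmaX_pow_mem (hp0 : 0 < p) (i : ℕ) :
    (sigmaX K m n i) ^ p ∈ Algebra.adjoin K (nsGens K p m n) := by
  rcases Nat.eq_zero_or_pos i with rfl | hi
  · rw [sigmaX_zero, one_pow]; exact one_mem _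
  rcases le_or_gt i m with him | him
  · exact Algebra.subset_adjoin (Or.inl (Or.inl (Or.inr ⟨i, hi, him, rfl⟩)))
  · rw [sigmaX_eq_zero K m n him, zero_pow (by omega)]
    exact zero_mem _

lemma sigmaY_pow_mem (hp0 : 0 < p) (j : ℕ) :
    (sigmaY K m n j) ^ p ∈ Algebra.adjoin K (nsGens K p m n) := by
  rcases Nat.eq_zero_or_pos j with rfl | hj
  · rw [sigmaY_zero, one_pow]; exact one_mem _
  rcases le_or_gt j n with hjn | hjn
  · exact Algebra.subset_adjoin (Or.inl (Or.inr ⟨j, hj, hjn, rfl⟩))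
  · rw [sigmaY_eq_zero K m n hjn, zero_pow (by omega)]
    exact zero_mem _

lemma coeff_cGen_pow_mem (k b : ℕ) :
    PowerSeries.coeff b ((cGen K m n) ^ k) ∈ Algebra.adjoin K (nsGens K p m n) := by
  induction k generalizing b with
  | zero =>
      rw [pow_zero, PowerSeries.coeff_one]
      split
      · exact one_mem _
      · exact zero_mem _
  | succ k ih =>
      rw [pow_succ, PowerSeries.coeff_mul]
      refine Subalgebra.sum_mem _ fun ab _ => mul_mem (ih ab.1) ?_
      rw [coeff_cGen]
      exact cpoly_mem K p m n ab.2

lemma coeff_cGen_pow_homog (k b : ℕ) :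
    (PowerSeries.coeff b ((cGen K m n) ^ k)).IsHomogeneous b := by
  induction k generalizing b with
  | zero =>
      rw [pow_zero, PowerSeries.coeff_one]
      split
      · subst ‹b = 0›; exact MvPolynomial.isHomogeneous_one _ _
      · exact MvPolynomial.isHomogeneous_zero _ _ _
  | succ k ih =>
      rw [pow_succ, PowerSeries.coeff_mul]
      apply MvPolynomial.IsHomogeneous.sum
      intro ab hab
      have hc : (PowerSeries.coeff ab.2 (cGen K m n)).IsHomogeneous ab.2 := by
        rw [coeff_cGen]; exact isHomog_cpoly K m n ab.2
      have h := (ih ab.1).mul hc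
      rwa [Finset.HasAntidiagonal.mem_antidiagonal.mp hab] at h

variable (M N : ℕ)

lemma pe_isHomogeneous {f : MvPolynomial (Fin M ⊕ Fin N) K} {t : ℕ}
    (hf : f.IsHomogeneous t) : (pe K M N m n f).IsHomogeneous t := by
  have h := hf.aeval (Sum.elim
    (fun i : Fin M => if h : (i : ℕ) < m then
      (MvPolynomial.X (Sum.inl ⟨(i : ℕ), h⟩) : MvPolynomial (Fin m ⊕ Fin n) K) else 0)
    (fun j : Fin N => if h : (j : ℕ) < n then MvPolynomial.X (Sum.inr ⟨(j : ℕ), h⟩) else 0))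
    (n := 1) ?_
  · rw [one_mul] at h
    exact h
  · rintro (i | j)
    · simp only [Sum.elim_inl]
      split
      · exact MvPolynomial.isHomogeneous_X _ _
      · exact MvPolynomial.isHomogeneous_zero _ _ _
    · simp only [Sum.elim_inr]
      split
      · exact MvPolynomial.isHomogeneous_X _ _
      · exact MvPolynomial.isHomogeneous_zero _ _ _

variable (hM : m ≤ M) (hN : n ≤ N)

include hM hN in
lemma pe_adjoin_mem (hp0 : 0 < p) {f : MvPolynomial (Fin M ⊕ Fin N) K}
    (hf : f ∈ Algebra.adjoin K (nsGens K p M N)) :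
    pe K M N m n f ∈ Algebra.adjoin K (nsGens K p m n) := by
  have hmem : pe K M N m n f ∈ (Algebra.adjoin K (nsGens K p M N)).map (pe K M N m n) :=
    ⟨f, hf, rfl⟩
  rw [AlgHom.map_adjoin] at hmem
  refine Algebra.adjoin_le ?_ hmem
  rintro y ⟨x, hx, rfl⟩
  rcases hx with ((⟨r, rfl⟩ | ⟨i, hi1, hi2, rfl⟩) | ⟨j, hj1, hj2, rfl⟩) | ⟨k, hk1, hk2, rfl⟩
  · rw [pe_cpoly K M N m n hM hN]
    exact cpoly_mem K p m n r
  · rw [map_pow, pe_sigmaX K M N m n hM hN]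
    exact sigmaX_pow_mem K p m n hp0 i
  · rw [map_pow, pe_sigmaY K M N m n hM hN]
    exact sigmaY_pow_mem K p m n hp0 j
  · rw [map_mul, map_pow, map_pow, pe_sigmaX K M N m n hM hN, pe_sigmaY K M N m n hM hN]
    rcases lt_or_eq_of_le hM with hMm | rfl
    · rw [sigmaX_eq_zero K m n hMm, zero_pow (by omega), zero_mul]
      exact zero_mem _
    rcases lt_or_eq_of_le hN with hNn | rfl
    · rw [sigmaY_eq_zero K m n hNn, zero_pow (by omega), mul_zero]
      exact zero_mem _
    exact Algebra.subset_adjoin (Or.inr ⟨k, hk1, hk2, rfl⟩)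

end Assemble

noncomputable section Final

variable (K : Type*) [Field K] (p : ℕ) [CharP K p] [Fact p.Prime] (M N m n : ℕ)

/-- The preimage of `u_k(m|n)` inside `A_ns(M|N)`. -/
def uPre (k : ℕ) : MvPolynomial (Fin M ⊕ Fin N) K :=
  ∑ ab ∈ Finset.HasAntidiagonal.antidiagonal (k * m + (p - k) * n),
    (if p ∣ ab.1 then (sigmaY K M N (ab.1 / p)) ^ p else 0) *
      PowerSeries.coeff ab.2 ((cGen K M N) ^ k)

lemma uPre_mem (hp0 : 0 < p) (k : ℕ) :
    uPre K p M N m n k ∈ Algebra.adjoin K (nsGens K p M N) := by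
  refine Subalgebra.sum_mem _ fun ab _ => mul_mem ?_ (coeff_cGen_pow_mem K p M N k ab.2)
  split
  · exact sigmaY_pow_mem K p M N hp0 _
  · exact zero_mem _

lemma uPre_homog (k : ℕ) :
    (uPre K p M N m n k).IsHomogeneous (k * m + (p - k) * n) := by
  refine MvPolynomial.IsHomogeneous.sum _ _ _ fun ab hab => ?_
  have h2 := coeff_cGen_pow_homog K M N k ab.2
  have h1 : ((if p ∣ ab.1 then (sigmaY K M N (ab.1 / p)) ^ p else 0 :
      MvPolynomial (Fin M ⊕ Fin N) K)).IsHomogeneous ab.1 := by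
    split
    · rename_i hd
      have := (isHomog_sigmaY K M N (ab.1 / p)).pow p
      rwa [Nat.div_mul_cancel hd] at this
    · exact MvPolynomial.isHomogeneous_zero _ _ _
  have h := h1.mul h2
  rwa [Finset.HasAntidiagonal.mem_antidiagonal.mp hab] at h

lemma pe_coeff_cGen_pow (hM : m ≤ M) (hN : n ≤ N) (k b : ℕ) :
    pe K M N m n (PowerSeries.coeff b ((cGen K M N) ^ k))
      = PowerSeries.coeff b ((cGen K m n) ^ k) := by
  have h : PowerSeries.map (pe K M N m n).toRingHom ((cGen K M N) ^ k)
      = (cGen K m n) ^ k := by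
    rw [map_pow, map_pe_cGen K M N m n hM hN]
  have h2 := congrArg (PowerSeries.coeff b) h
  rwa [PowerSeries.coeff_map] at h2

lemma pe_uPre (hM : m ≤ M) (hN : n ≤ N) (k : ℕ) (hk : k ≤ p) :
    pe K M N m n (uPre K p M N m n k)
      = (sigmaX K m n m) ^ k * (sigmaY K m n n) ^ (p - k) := by
  rw [uPre, map_sum, key_identity K p m n k hk]
  refine Finset.sum_congr rfl fun ab _ => ?_
  rw [map_mul, pe_coeff_cGen_pow K M N m n hM hN]
  congr 1
  split
  · rw [map_pow, pe_sigmaY K M N m n hM hN]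
  · rw [map_zero]

lemma surj_piece (hM : m ≤ M) (hN : n ≤ N) (hp0 : 0 < p) (t : ℕ)
    (g : MvPolynomial (Fin m ⊕ Fin n) K)
    (hgA : g ∈ Algebra.adjoin K (nsGens K p m n)) (hgH : g.IsHomogeneous t) :
    ∃ f, f ∈ Algebra.adjoin K (nsGens K p M N) ∧ f.IsHomogeneous t ∧
      pe K M N m n f = g := by
  classical
  set AU := Algebra.adjoin K (nsGens K p M N) with hAU
  let Good : Submonoid (MvPolynomial (Fin m ⊕ Fin n) K) :=
    { carrier := {g | ∃ t' f, f ∈ AU ∧ f.IsHomogeneous t' ∧ pe K M N m n f = g}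
      mul_mem' := by
        rintro a b ⟨ta, fa, hfa, hha, rfl⟩ ⟨tb, fb, hfb, hhb, rfl⟩
        exact ⟨ta + tb, fa * fb, mul_mem hfa hfb, hha.mul hhb, map_mul _ _ _⟩
      one_mem' := ⟨0, 1, one_mem _, MvPolynomial.isHomogeneous_one _ _, map_one _⟩ }
  have hgens : nsGens K p m n ⊆ (Good : Set _) := by
    rintro x (((⟨r, rfl⟩ | ⟨i, hi1, hi2, rfl⟩) | ⟨j, hj1, hj2, rfl⟩) | ⟨k, hk1, hk2, rfl⟩)
    · exact ⟨r, cpoly K M N r, cpoly_mem K p M N r, isHomog_cpoly K M N r,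
        pe_cpoly K M N m n hM hN r⟩
    · exact ⟨i * p, (sigmaX K M N i) ^ p,
        sigmaX_pow_mem K p M N hp0 i, (isHomog_sigmaX K M N i).pow p,
        by rw [map_pow, pe_sigmaX K M N m n hM hN]⟩
    · exact ⟨j * p, (sigmaY K M N j) ^ p,
        sigmaY_pow_mem K p M N hp0 j, (isHomog_sigmaY K M N j).pow p,
        by rw [map_pow, pe_sigmaY K M N m n hM hN]⟩
    · exact ⟨k * m + (p - k) * n, uPre K p M N m n k,
        uPre_mem K p M N m n hp0 k, uPre_homog K p M N m n k,
        pe_uPre K p M N m n hM hN k (le_of_lt hk2)⟩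
  have hspan : g ∈ Submodule.span K (Good : Set _) := by
    have h1 : g ∈ Algebra.adjoin K (Good : Set _) :=
      Algebra.adjoin_mono hgens hgA
    have h2 := Algebra.adjoin_eq_span (R := K)
      (s := (Good : Set (MvPolynomial (Fin m ⊕ Fin n) K)))
    rw [Submonoid.closure_eq] at h2
    have h3 : g ∈ Subalgebra.toSubmodule (Algebra.adjoin K (Good : Set _)) := h1
    rw [h2] at h3
    exact h3
  let Wt : ℕ → Submodule K (MvPolynomial (Fin m ⊕ Fin n) K) := fun t' =>
    Submodule.map (pe K M N m n).toLinearMap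
      ((Subalgebra.toSubmodule AU) ⊓ (homogeneousSubmodule _ K t'))
  have hP : ∀ t', homogeneousComponent t' g ∈ Wt t' := by
    intro t'
    refine Submodule.span_induction ?_ ?_ ?_ ?_ hspan
    · rintro x ⟨t'', f, hf, hh, rfl⟩
      have hxh : (pe K M N m n f).IsHomogeneous t'' := pe_isHomogeneous K m n M N hh
      rw [MvPolynomial.homogeneousComponent_of_mem
        ((MvPolynomial.mem_homogeneousSubmodule _ _).mpr hxh)]
      split
      · rename_i hEq
        subst hEq
        exact ⟨f, Submodule.mem_inf.mpr ⟨hf,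
          (MvPolynomial.mem_homogeneousSubmodule _ _).mpr hh⟩, rfl⟩
      · exact zero_mem _
    · rw [map_zero]; exact zero_mem _
    · intro x y _ _ hx hy
      rw [map_add]; exact add_mem hx hy
    · intro a x _ hx
      rw [map_smul]; exact Submodule.smul_mem _ _ hx
  have hPt := hP t
  rw [MvPolynomial.homogeneousComponent_of_mem
    ((MvPolynomial.mem_homogeneousSubmodule _ _).mpr hgH), if_pos rfl] at hPt
  obtain ⟨f, hf, hpef⟩ := hPt
  rcases Submodule.mem_inf.mp hf with ⟨hf1, hf2⟩
  exact ⟨f, hf1, (MvPolynomial.mem_homogeneousSubmodule _ _).mp hf2, hpef⟩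

end Final


noncomputable section

/-- **Corollary 1.2.** For every `t ≥ 0`, the evaluation morphism `p_e` maps the homogeneous
component `A_ns(M|N,t)` onto the homogeneous component `A_ns(m|n,t)`. -/
theorem pe_maps_Ans_component_onto (K : Type*) [Field K] [IsAlgClosed K]
    (p : ℕ) [CharP K p] (hp : 2 < p) (M N m n : ℕ)
    (hm : 1 ≤ m) (hn : 1 ≤ n) (hM : m ≤ M) (hN : n ≤ N) (t : ℕ) :
    (pe K M N m n) ''
        {f | f ∈ Algebra.adjoin K (nsGens K p M N) ∧ f.IsHomogeneous t} =
      {g | g ∈ Algebra.adjoin K (nsGens K p m n) ∧ g.IsHomogeneous t} := by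
  have hp' : p.Prime := by
    rcases CharP.char_is_prime_or_zero K p with h | h
    · exact h
    · omega
  haveI : Fact p.Prime := ⟨hp'⟩
  ext g
  simp only [Set.mem_image, Set.mem_setOf_eq]
  constructor
  · rintro ⟨f, ⟨hfA, hfH⟩, rfl⟩
    exact ⟨pe_adjoin_mem K p m n M N hM hN (by omega) hfA,
      pe_isHomogeneous K m n M N hfH⟩
  · rintro ⟨hgA, hgH⟩
    obtain ⟨f, h1, h2, h3⟩ := surj_piece K p M N m n hM hN (by omega) t g hgA hgH
    exact ⟨f, ⟨h1, h2⟩, h3⟩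

end
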